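/- Let Σ be a p×p correlation matrix (unit diagonal, symmetric PSD) with max_{j≠j'}|Σ_{jj'}| = γ ≤ ω₀/(2k̄) for some 0 ≤ ω₀ < 1 and integer k̄ ≥ k ≥ 1. Let S ⊆ {1,…,p} with |S| = k, and β ∈ R^p with ‖β_{S^c}‖₁ ≤ σηln, where ln = √((2 log p)/n) and η ≥ 0. Then ‖Σ_{SS}^{-1} Σ_{S S^c} β_{S^c}‖_∞ ≤ σ·ω₀·(η/k̄)·ln. -/

import Mathlib

set_option maxHeartbeats 1000000 in
/-- Under incoherence `γ(Σ) ≤ ω₀ / (2 k̄)` (with `0 ≤ ω₀ < 1`, `k̄ ≥ k ≥ 1`) for a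
correlation matrix `M`, a subset `S` of size `k`, and `β` with `‖β_{Sᶜ}‖₁ ≤ σ η ln`
where `ln = √((2 log p)/n)`, one has `‖M_{SS}⁻¹ M_{S Sᶜ} β_{Sᶜ}‖_∞ ≤ σ ω₀ (η/k̄) ln`. -/
theorem linf_bound_inv_cross_term {p n k kbar : ℕ}
    (M : Matrix (Fin p) (Fin p) ℝ) (γ ω₀ σ η : ℝ)
    (hsym : M.IsSymm) (hpsd : M.PosSemidef) (hdiag : ∀ j, M j j = 1)
    (hγ : ∀ i j, i ≠ j → |M i j| ≤ γ)
    (hω₀ : 0 ≤ ω₀) (hω₁ : ω₀ < 1) (hk : 1 ≤ k) (hkbar : k ≤ kbar)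
    (hcoh : γ ≤ ω₀ / (2 * kbar)) (hη : 0 ≤ η)
    (S : Finset (Fin p)) (hS : S.card = k) (β : Fin p → ℝ)
    (hβ : ∑ j ∈ Sᶜ, |β j| ≤ σ * η * Real.sqrt (2 * Real.log p / n)) :
    ∀ i : S,
      |((M.submatrix (fun i : S => (i : Fin p)) (fun j : S => (j : Fin p)))⁻¹.mulVec
          (fun i : S => ∑ j ∈ Sᶜ, M (i : Fin p) j * β j)) i| ≤
        σ * ω₀ * (η / kbar) * Real.sqrt (2 * Real.log p / n) := by
  intro i
  set ln := Real.sqrt (2 * Real.log p / n) with hln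
  set A := M.submatrix (fun i : S => (i : Fin p)) (fun j : S => (j : Fin p)) with hA
  set v : S → ℝ := fun i : S => ∑ j ∈ Sᶜ, M (i : Fin p) j * β j with hv
  set γ' := max γ 0 with hγ'def
  have hγ'0 : 0 ≤ γ' := le_max_right _ _
  have hkbar1 : (1:ℝ) ≤ (kbar:ℝ) := by exact_mod_cast le_trans hk hkbar
  have hkbar0 : (0:ℝ) < (kbar:ℝ) := lt_of_lt_of_le one_pos hkbar1
  have hγ'coh : γ' ≤ ω₀ / (2 * kbar) := max_le hcoh (by positivity)
  have hγ'M : ∀ i j : S, i ≠ j → |A i j| ≤ γ' := by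
    intro a b hab
    exact le_trans (hγ _ _ (fun h => hab (Subtype.ext h))) (le_max_left _ _)
  have hcardS : Fintype.card S = k := by rw [Fintype.card_coe, hS]
  -- c = k - 1
  set c : ℝ := ((k - 1 : ℕ) : ℝ) with hc
  have hc0 : 0 ≤ c := Nat.cast_nonneg _
  have hckbar : c ≤ (kbar : ℝ) := by
    have h : k - 1 ≤ kbar := le_trans (Nat.sub_le _ _) hkbar
    exact Nat.cast_le.mpr h
  have hδ : γ' * c < 1 / 2 := by
    have h1 : γ' * c ≤ (ω₀ / (2 * kbar)) * (kbar : ℝ) := by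
      calc γ' * c ≤ γ' * (kbar : ℝ) := by nlinarith
        _ ≤ (ω₀ / (2 * kbar)) * (kbar : ℝ) := by nlinarith
    have h2 : (ω₀ / (2 * kbar)) * (kbar : ℝ) = ω₀ / 2 := by
      field_simp
    rw [h2] at h1
    linarith
  -- key inequality
  have key : ∀ (x : S → ℝ) (i₀ : S), (∀ j : S, |x j| ≤ |x i₀|) →
      (1 - γ' * c) * |x i₀| ≤ |A.mulVec x i₀| := by
    intro x i₀ hmax
    have hsplit : A.mulVec x i₀ = x i₀ + ∑ j ∈ Finset.univ.erase i₀, A i₀ j * x j := by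
      simp only [Matrix.mulVec, dotProduct]
      rw [← Finset.add_sum_erase _ _ (Finset.mem_univ i₀)]
      congr 1
      have : A i₀ i₀ = 1 := hdiag _
      rw [this, one_mul]
    have hx : x i₀ = A.mulVec x i₀ - ∑ j ∈ Finset.univ.erase i₀, A i₀ j * x j := by
      rw [hsplit]; ring
    have hsum : |∑ j ∈ Finset.univ.erase i₀, A i₀ j * x j| ≤ γ' * c * |x i₀| := by
      calc |∑ j ∈ Finset.univ.erase i₀, A i₀ j * x j|
          ≤ ∑ j ∈ Finset.univ.erase i₀, |A i₀ j * x j| := Finset.abs_sum_le_sum_abs _ _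
        _ ≤ ∑ _j ∈ Finset.univ.erase i₀, γ' * |x i₀| := by
            apply Finset.sum_le_sum
            intro j hj
            rw [abs_mul]
            exact mul_le_mul (hγ'M _ _ (fun h => (Finset.mem_erase.mp hj).1 h.symm))
              (hmax j) (abs_nonneg _) hγ'0
        _ = ((Finset.univ.erase i₀).card : ℝ) * (γ' * |x i₀|) := by
            rw [Finset.sum_const, nsmul_eq_mul]
        _ = γ' * c * |x i₀| := by
            rw [Finset.card_erase_of_mem (Finset.mem_univ _), Finset.card_univ, hcardS]
            ring
    have : |x i₀| ≤ |A.mulVec x i₀| + γ' * c * |x i₀| := by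
      calc |x i₀| = |A.mulVec x i₀ - ∑ j ∈ Finset.univ.erase i₀, A i₀ j * x j| := by rw [← hx]
        _ ≤ |A.mulVec x i₀| + |∑ j ∈ Finset.univ.erase i₀, A i₀ j * x j| := abs_sub _ _
        _ ≤ |A.mulVec x i₀| + γ' * c * |x i₀| := by linarith
    linarith
  -- A is invertible
  have hSne : (Finset.univ : Finset S).Nonempty := by
    rw [Finset.univ_nonempty_iff]
    have : 0 < Fintype.card S := by omega
    exact Fintype.card_pos_iff.mp this
  have hdet : IsUnit A.det := by
    rw [isUnit_iff_ne_zero]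
    intro hdet0
    obtain ⟨x, hx0, hx⟩ := Matrix.exists_mulVec_eq_zero_iff.mpr hdet0
    obtain ⟨i₀, -, hi₀⟩ := Finset.exists_max_image Finset.univ (fun j => |x j|) hSne
    have := key x i₀ (fun j => hi₀ j (Finset.mem_univ _))
    rw [hx] at this
    simp only [Pi.zero_apply, abs_zero] at this
    have hxi₀ : |x i₀| ≤ 0 := by nlinarith
    apply hx0
    funext j
    have := le_trans (hi₀ j (Finset.mem_univ _)) hxi₀
    exact abs_nonpos_iff.mp this
  set x : S → ℝ := A⁻¹.mulVec v with hxdef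
  have hAx : A.mulVec x = v := by
    rw [hxdef, Matrix.mulVec_mulVec, Matrix.mul_nonsing_inv _ hdet, Matrix.one_mulVec]
  -- bound on v
  set B : ℝ := ∑ j ∈ Sᶜ, |β j| with hB
  have hB0 : 0 ≤ B := Finset.sum_nonneg (fun _ _ => abs_nonneg _)
  have hvb : ∀ i₀ : S, |v i₀| ≤ γ' * B := by
    intro i₀
    calc |v i₀| ≤ ∑ j ∈ Sᶜ, |M (i₀ : Fin p) j * β j| := Finset.abs_sum_le_sum_abs _ _
      _ ≤ ∑ j ∈ Sᶜ, γ' * |β j| := by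
          apply Finset.sum_le_sum
          intro j hj
          rw [abs_mul]
          apply mul_le_mul_of_nonneg_right _ (abs_nonneg _)
          refine le_trans (hγ _ _ ?_) (le_max_left _ _)
          intro h
          rw [Finset.mem_compl] at hj
          exact hj (h ▸ i₀.2)
      _ = γ' * B := by rw [← Finset.mul_sum]
  -- finish
  obtain ⟨i₀, -, hi₀⟩ := Finset.exists_max_image Finset.univ (fun j => |x j|) hSne
  have hkey := key x i₀ (fun j => hi₀ j (Finset.mem_univ _))
  rw [hAx] at hkey
  have h1 : |x i₀| ≤ 2 * (γ' * B) := by nlinarith [hvb i₀, abs_nonneg (x i₀)]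
  have h2 : 2 * γ' ≤ ω₀ / kbar := by
    rw [le_div_iff₀ (by positivity : (0:ℝ) < 2 * kbar)] at hγ'coh
    rw [le_div_iff₀ hkbar0]
    nlinarith
  have h3 : |x i| ≤ |x i₀| := hi₀ i (Finset.mem_univ _)
  have h4 : B ≤ σ * η * ln := hβ
  have h5 : 0 ≤ ω₀ / kbar := by positivity
  calc |x i| ≤ 2 * (γ' * B) := le_trans h3 h1
    _ ≤ (ω₀ / kbar) * B := by nlinarith
    _ ≤ (ω₀ / kbar) * (σ * η * ln) := by nlinarith
    _ = σ * ω₀ * (η / kbar) * ln := by ring
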